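/- For every graph G without isolated vertices, γ(G[2K₁]) = γ_t(G), where 2K₁ is the edgeless graph on two vertices. -/

import Mathlib

open SimpleGraph Finset

/-- Open neighborhood of a set: vertices having a neighbor in `S`. -/
def nbhd {V : Type*} (G : SimpleGraph V) (S : Set V) : Set V := {v | ∃ u ∈ S, G.Adj u v}

/-- Closed neighborhood of a vertex. -/
def closedNbhd {V : Type*} (G : SimpleGraph V) (v : V) : Set V := insert v (G.neighborSet v)

/-- `S` dominates vertex `v`. -/
def Dominates {V : Type*} (G : SimpleGraph V) (S : Set V) (v : V) : Prop :=
  v ∈ S ∨ ∃ u ∈ S, G.Adj u v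

/-- `D` is a dominating set of `G`. -/
def IsDomSet {V : Type*} (G : SimpleGraph V) (D : Set V) : Prop := ∀ v, Dominates G D v

/-- `D` is a minimal dominating set of `G`. -/
def IsMinDomSet {V : Type*} (G : SimpleGraph V) (D : Set V) : Prop :=
  IsDomSet G D ∧ ∀ D' ⊂ D, ¬ IsDomSet G D'

/-- `D` is an irreducible dominating set of `G`. -/
def IsIrredDomSet {V : Type*} (G : SimpleGraph V) (D : Set V) : Prop :=
  IsDomSet G D ∧ ¬ ∃ u ∈ D, IsDomSet G (D \ {u}) ∧ nbhd G D = nbhd G (D \ {u})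

/-- Lexicographic product of two simple graphs. -/
def lexProd {V W : Type*} (G : SimpleGraph V) (H : SimpleGraph W) : SimpleGraph (V × W) where
  Adj p q := G.Adj p.1 q.1 ∨ (p.1 = q.1 ∧ H.Adj p.2 q.2)
  symm := by
    constructor
    rintro p q (h | ⟨e, h⟩)
    · exact Or.inl h.symm
    · exact Or.inr ⟨e.symm, h.symm⟩
  loopless := by
    constructor
    rintro p (h | ⟨_, h⟩)
    · exact G.loopless.irrefl _ h
    · exact H.loopless.irrefl _ h

/-- Projection of `D ⊆ V(G) × V(H)` to `G`. -/
def projG {V W : Type*} (D : Set (V × W)) : Set V := {x | ∃ y, (x, y) ∈ D}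

/-- Fiber of `D ⊆ V(G) × V(H)` over `x ∈ V(G)`. -/
def projH {V W : Type*} (D : Set (V × W)) (x : V) : Set W := {y | (x, y) ∈ D}

/-- The domination number. -/
noncomputable def domNum {V : Type*} [Fintype V] (G : SimpleGraph V) : ℕ :=
  sInf {n | ∃ D : Finset V, IsDomSet G ↑D ∧ D.card = n}

/-- The total domination number. -/
noncomputable def totDomNum {V : Type*} [Fintype V] (G : SimpleGraph V) : ℕ :=
  sInf {n | ∃ D : Finset V, (∀ v, ∃ u ∈ D, G.Adj u v) ∧ D.card = n}

theorem stmt11 {V : Type*} [Fintype V] (G : SimpleGraph V)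
    (hiso : ∀ v : V, ∃ u, G.Adj v u) :
    domNum (lexProd G (⊥ : SimpleGraph (Fin 2))) = totDomNum G := by
  classical
  have hne_t : {n | ∃ D : Finset V, (∀ v, ∃ u ∈ D, G.Adj u v) ∧ D.card = n}.Nonempty := by
    refine ⟨Finset.univ.card, Finset.univ, fun v => ?_, rfl⟩
    obtain ⟨u, hu⟩ := hiso v
    exact ⟨u, Finset.mem_univ u, hu.symm⟩
  have hne_d : {n | ∃ D : Finset (V × Fin 2),
      IsDomSet (lexProd G (⊥ : SimpleGraph (Fin 2))) ↑D ∧ D.card = n}.Nonempty :=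
    ⟨Finset.univ.card, Finset.univ, fun v => Or.inl (by simp), rfl⟩
  apply le_antisymm
  · obtain ⟨T, hT, hcard⟩ : ∃ D : Finset V, (∀ v, ∃ u ∈ D, G.Adj u v) ∧ D.card = totDomNum G :=
      Nat.sInf_mem hne_t
    have hle : domNum (lexProd G (⊥ : SimpleGraph (Fin 2))) ≤
        (T.image (fun x => (x, (0 : Fin 2)))).card := by
      apply Nat.sInf_le
      refine ⟨_, fun p => ?_, rfl⟩
      obtain ⟨u, huT, hux⟩ := hT p.1
      exact Or.inr ⟨(u, 0), Finset.mem_coe.mpr (Finset.mem_image_of_mem _ huT), Or.inl hux⟩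
    have hinj : Function.Injective (fun x : V => (x, (0 : Fin 2))) := fun a b h =>
      congrArg Prod.fst h
    rwa [Finset.card_image_of_injective _ hinj, hcard] at hle
  · obtain ⟨D, hD, hcard⟩ : ∃ D : Finset (V × Fin 2),
        IsDomSet (lexProd G (⊥ : SimpleGraph (Fin 2))) ↑D ∧
        D.card = domNum (lexProd G (⊥ : SimpleGraph (Fin 2))) := Nat.sInf_mem hne_d
    set S : Finset V := D.image Prod.fst with hS
    -- if x has no neighbor in S, then both fibers are in D
    have hfiber : ∀ x : V, (¬ ∃ u ∈ S, G.Adj u x) → ∀ y : Fin 2, (x, y) ∈ D := by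
      intro x hx y
      rcases hD (x, y) with h | ⟨⟨u, w⟩, huD, hadj⟩
      · exact h
      · rcases hadj with h | ⟨_, h⟩
        · exact absurd ⟨u, Finset.mem_image_of_mem Prod.fst (Finset.mem_coe.mp huD), h⟩ hx
        · exact absurd h (by simp)
    set A : Finset V := S.filter (fun x => ¬ ∃ u ∈ S, G.Adj u x) with hA
    choose f hf using hiso
    set T : Finset V := S ∪ A.image f with hT
    -- T is a total dominating set
    have htot : ∀ x : V, ∃ u ∈ T, G.Adj u x := by
      intro x
      by_cases hx : ∃ u ∈ S, G.Adj u x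
      · obtain ⟨u, hu, h⟩ := hx
        exact ⟨u, Finset.mem_union_left _ hu, h⟩
      · have hx0 : (x, (0 : Fin 2)) ∈ D := hfiber x hx 0
        have hxS : x ∈ S := Finset.mem_image_of_mem Prod.fst hx0
        have hxA : x ∈ A := Finset.mem_filter.mpr ⟨hxS, hx⟩
        exact ⟨f x, Finset.mem_union_right _ (Finset.mem_image_of_mem f hxA),
          (hf x).symm⟩
    -- cardinality: card T ≤ card D
    have hcount : S.card + A.card ≤ D.card := by
      have h1 : D.card = ∑ x ∈ S, (D.filter (fun p => p.1 = x)).card :=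
        Finset.card_eq_sum_card_image Prod.fst D
      have h2 : ∀ x ∈ S, (if x ∈ A then 2 else 1) ≤ (D.filter (fun p => p.1 = x)).card := by
        intro x hxS
        by_cases hxA : x ∈ A
        · simp only [hxA, if_true]
          have hx := (Finset.mem_filter.mp hxA).2
          have h0 : (x, (0 : Fin 2)) ∈ D.filter (fun p => p.1 = x) :=
            Finset.mem_filter.mpr ⟨hfiber x hx 0, rfl⟩
          have h1' : (x, (1 : Fin 2)) ∈ D.filter (fun p => p.1 = x) :=
            Finset.mem_filter.mpr ⟨hfiber x hx 1, rfl⟩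
          exact Finset.one_lt_card.mpr ⟨_, h0, _, h1', by simp⟩
        · simp only [hxA, if_false]
          obtain ⟨p, hpD, hp⟩ := Finset.mem_image.mp hxS
          exact Finset.card_pos.mpr ⟨p, Finset.mem_filter.mpr ⟨hpD, hp⟩⟩
      calc S.card + A.card = ∑ x ∈ S, (if x ∈ A then 2 else 1) := by
            have heq : ∀ x, (if x ∈ A then 2 else 1) = 1 + (if x ∈ A then 1 else 0) := by
              intro x; split <;> rfl
            rw [Finset.sum_congr rfl (fun x _ => heq x), Finset.sum_add_distrib,
              Finset.sum_const, Finset.sum_ite_mem,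
              Finset.inter_eq_right.mpr (Finset.filter_subset _ _), Finset.sum_const]
            simp only [smul_eq_mul, mul_one]
            rfl
        _ ≤ ∑ x ∈ S, (D.filter (fun p => p.1 = x)).card := Finset.sum_le_sum h2
        _ = D.card := h1.symm
    have hTcard : T.card ≤ D.card := by
      calc T.card ≤ S.card + (A.image f).card := Finset.card_union_le _ _
        _ ≤ S.card + A.card := by
            exact Nat.add_le_add_left (Finset.card_image_le) _
        _ ≤ D.card := hcount
    calc totDomNum G ≤ T.card := Nat.sInf_le ⟨T, htot, rfl⟩
      _ ≤ D.card := hTcard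
      _ = _ := hcard
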